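/- Let A be an n×n real symmetric matrix, B an n×q real matrix, and K a q×q real symmetric matrix such that the (n+q)×(n+q) block matrix [[A, B], [Bᵀ, K]] is positive semidefinite. Let Φ be an r×q real matrix such that Φ K Φᵀ is positive definite, and let T be an n×n real positive semidefinite matrix. Then the matrix B Φᵀ (Φ K Φᵀ)⁻¹ Φ Bᵀ + (A − B Φᵀ (Φ K Φᵀ)⁻¹ Φ Bᵀ) ∘ T, where ∘ denotes the Hadamard (entrywise) product, is positive semidefinite. -/

import Mathlib

open Matrix

/-- Schur product theorem (real case): Hadamard product of PSD matrices is PSD. -/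
lemma hadamard_psd {n : ℕ} {M N : Matrix (Fin n) (Fin n) ℝ}
    (hM : M.PosSemidef) (hN : N.PosSemidef) : (Matrix.hadamard M N).PosSemidef := by
  obtain ⟨C, rfl⟩ : ∃ C : Matrix (Fin n) (Fin n) ℝ, M = Cᴴ * C := by
    open scoped MatrixOrder in exact CStarAlgebra.nonneg_iff_eq_star_mul_self.mp hM.nonneg
  obtain ⟨D, rfl⟩ : ∃ D : Matrix (Fin n) (Fin n) ℝ, N = Dᴴ * D := by
    open scoped MatrixOrder in exact CStarAlgebra.nonneg_iff_eq_star_mul_self.mp hN.nonneg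
  set E : Matrix (Fin n × Fin n) (Fin n) ℝ := fun p j => C p.1 j * D p.2 j with hE
  have key : Matrix.hadamard (Cᴴ * C) (Dᴴ * D) = Eᴴ * E := by
    ext j k
    simp only [Matrix.hadamard_apply, Matrix.mul_apply, Matrix.conjTranspose_apply,
      star_trivial, hE, Fintype.sum_prod_type]
    rw [Finset.sum_mul_sum]
    change _ = ∑ p : Fin n × Fin n, (C p.1 j * D p.2 j) * (C p.1 k * D p.2 k)
    rw [Fintype.sum_prod_type]
    refine Finset.sum_congr rfl fun i _ => Finset.sum_congr rfl fun l _ => by ring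
  rw [key]
  exact Matrix.posSemidef_conjTranspose_mul_self E

theorem mlp_cov_posSemidef {n q r : ℕ}
    (A : Matrix (Fin n) (Fin n) ℝ) (B : Matrix (Fin n) (Fin q) ℝ)
    (K : Matrix (Fin q) (Fin q) ℝ) (Φ : Matrix (Fin r) (Fin q) ℝ)
    (T : Matrix (Fin n) (Fin n) ℝ)
    (hA : A.IsHermitian) (hK : K.IsHermitian)
    (hblock : (Matrix.fromBlocks A B Bᵀ K).PosSemidef)
    (hΦK : (Φ * K * Φᵀ).PosDef) (hT : T.PosSemidef) :
    (B * Φᵀ * (Φ * K * Φᵀ)⁻¹ * (Φ * Bᵀ) +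
      Matrix.hadamard (A - B * Φᵀ * (Φ * K * Φᵀ)⁻¹ * (Φ * Bᵀ)) T).PosSemidef := by
  haveI : Invertible (Φ * K * Φᵀ) := hΦK.isUnit.invertible
  -- congruence: diag(1, Φ) * fromBlocks A B Bᵀ K * diag(1, Φᵀ)
  have hcong : (Matrix.fromBlocks A (B * Φᵀ) (Φ * Bᵀ) (Φ * K * Φᵀ)).PosSemidef := by
    have h := hblock.mul_mul_conjTranspose_same
      (Matrix.fromBlocks (1 : Matrix (Fin n) (Fin n) ℝ) 0 0 Φ)
    convert h using 1
    rw [Matrix.fromBlocks_conjTranspose, Matrix.fromBlocks_multiply,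
      Matrix.fromBlocks_multiply]
    simp [Matrix.mul_assoc]
  have hBΦ : (B * Φᵀ)ᴴ = Φ * Bᵀ := by
    simp [Matrix.conjTranspose_mul, Matrix.conjTranspose_eq_transpose_of_trivial,
      Matrix.transpose_mul]
  have hschur : (A - B * Φᵀ * (Φ * K * Φᵀ)⁻¹ * (Φ * Bᵀ)).PosSemidef := by
    have := (Matrix.PosDef.fromBlocks₂₂ A (B * Φᵀ) hΦK).mp
    rw [hBΦ] at this
    exact this hcong
  have hL : (B * Φᵀ * (Φ * K * Φᵀ)⁻¹ * (Φ * Bᵀ)).PosSemidef := by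
    have := hΦK.inv.posSemidef.mul_mul_conjTranspose_same (B * Φᵀ)
    rwa [hBΦ] at this
  exact hL.add (hadamard_psd hschur hT)
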